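/- Let N ≥ 2 be an integer, p ∈ (0,1) with N p(1−p) ≥ 2, and let w ∼ Bin(N−1, p). Then E[ ( log(1 + 1/(w+1)) + log(1 + 1/(N−w)) − 1/(N p(1−p)) )² ] ≤ (3p³ + 3(1−p)³ + 2p² + 2(1−p)²) / (N³ p³ (1−p)³). -/

import Mathlib

open Finset
set_option maxHeartbeats 1600000

/-- The probability mass function of the binomial distribution `Bin(N, p)` at `j`. -/
noncomputable def binomPMF (N : ℕ) (p : ℝ) (j : ℕ) : ℝ :=
  (N.choose j : ℝ) * p ^ j * (1 - p) ^ (N - j)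

lemma choose_shift (n j : ℕ) :
    ((j : ℝ) + 1) * ((n + 1).choose (j + 1) : ℝ) = ((n : ℝ) + 1) * (n.choose j : ℝ) := by
  have h : (n + 1) * n.choose j = (n + 1).choose (j + 1) * (j + 1) := Nat.add_one_mul_choose_eq n j
  have h2 : (((n + 1) * n.choose j : ℕ) : ℝ) = (((n + 1).choose (j + 1) * (j + 1) : ℕ) : ℝ) := by
    exact_mod_cast congrArg Nat.cast h
  push_cast at h2
  linarith

lemma binom_sum (M : ℕ) (p q : ℝ) (hpq : p + q = 1) :
    ∑ k ∈ range (M + 1), (M.choose k : ℝ) * p ^ k * q ^ (M - k) = 1 := by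
  have h := add_pow p q M
  rw [hpq, one_pow] at h
  rw [show ∑ k ∈ range (M + 1), (M.choose k : ℝ) * p ^ k * q ^ (M - k)
      = ∑ k ∈ range (M + 1), p ^ k * q ^ (M - k) * (M.choose k : ℝ) from
    Finset.sum_congr rfl fun k _ => by ring]
  exact h.symm

lemma binom_sum_k (M : ℕ) (p q : ℝ) (hpq : p + q = 1) :
    ∑ k ∈ range (M + 2), (k : ℝ) * (((M + 1).choose k : ℕ) : ℝ) * p ^ k * q ^ (M + 1 - k)
      = ((M : ℝ) + 1) * p := by
  rw [Finset.sum_range_succ']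
  have h1 : ∀ i ∈ range (M + 1),
      ((i + 1 : ℕ) : ℝ) * (((M + 1).choose (i + 1) : ℕ) : ℝ) * p ^ (i + 1) * q ^ (M + 1 - (i + 1))
        = (((M : ℝ) + 1) * p) * ((M.choose i : ℝ) * p ^ i * q ^ (M - i)) := by
    intro i _
    have h := choose_shift M i
    have he : M + 1 - (i + 1) = M - i := by omega
    rw [he]
    push_cast
    linear_combination (p ^ (i + 1) * q ^ (M - i)) * h
  rw [Finset.sum_congr rfl h1, ← Finset.mul_sum, binom_sum M p q hpq]
  simp

lemma binom_sum_kk (M : ℕ) (p q : ℝ) (hpq : p + q = 1) :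
    ∑ k ∈ range (M + 3), (k : ℝ) * ((k : ℝ) - 1) * (((M + 2).choose k : ℕ) : ℝ) * p ^ k * q ^ (M + 2 - k)
      = ((M : ℝ) + 2) * ((M : ℝ) + 1) * p ^ 2 := by
  rw [Finset.sum_range_succ']
  have h1 : ∀ i ∈ range (M + 2),
      ((i + 1 : ℕ) : ℝ) * (((i + 1 : ℕ) : ℝ) - 1) * (((M + 2).choose (i + 1) : ℕ) : ℝ) * p ^ (i + 1) * q ^ (M + 2 - (i + 1))
        = (((M : ℝ) + 2) * p) * ((i : ℝ) * (((M + 1).choose i : ℕ) : ℝ) * p ^ i * q ^ (M + 1 - i)) := by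
    intro i _
    have h := choose_shift (M + 1) i
    have he : M + 2 - (i + 1) = M + 1 - i := by omega
    rw [he]
    push_cast at h ⊢
    linear_combination ((i : ℝ) * p ^ (i + 1) * q ^ (M + 1 - i)) * h
  rw [Finset.sum_congr rfl h1, ← Finset.mul_sum, binom_sum_k M p q hpq]
  simp
  ring

lemma binom_sum_sq (M : ℕ) (p q c : ℝ) (hpq : p + q = 1) :
    ∑ k ∈ range (M + 3), ((k : ℝ) - c) ^ 2 * (((M + 2).choose k : ℕ) : ℝ) * p ^ k * q ^ (M + 2 - k)
      = ((M : ℝ) + 2) * ((M : ℝ) + 1) * p ^ 2 + (1 - 2 * c) * ((M : ℝ) + 2) * p + c ^ 2 := by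
  have h1 : ∀ k ∈ range (M + 3),
      ((k : ℝ) - c) ^ 2 * (((M + 2).choose k : ℕ) : ℝ) * p ^ k * q ^ (M + 2 - k)
        = (k : ℝ) * ((k : ℝ) - 1) * (((M + 2).choose k : ℕ) : ℝ) * p ^ k * q ^ (M + 2 - k)
          + (1 - 2 * c) * ((k : ℝ) * (((M + 2).choose k : ℕ) : ℝ) * p ^ k * q ^ (M + 2 - k))
          + c ^ 2 * ((((M + 2).choose k : ℕ) : ℝ) * p ^ k * q ^ (M + 2 - k)) := by
    intro k _; ring
  rw [Finset.sum_congr rfl h1, Finset.sum_add_distrib, Finset.sum_add_distrib,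
    ← Finset.mul_sum, ← Finset.mul_sum]
  rw [binom_sum_kk M p q hpq]
  have h2 := binom_sum_k (M + 1) p q hpq
  push_cast at h2
  have h3 := binom_sum (M + 2) p q hpq
  push_cast at h2 h3 ⊢
  rw [show M + 1 + 2 = M + 3 from rfl] at h2
  rw [h2, h3]
  ring

lemma pmf_nonneg {n : ℕ} {p : ℝ} (hp : 0 < p) (hp1 : p < 1) (j : ℕ) : 0 ≤ binomPMF n p j := by
  unfold binomPMF
  have : (0:ℝ) ≤ 1 - p := by linarith
  positivity

lemma sum_pmf_inv (n : ℕ) (p : ℝ) (hp : 0 < p) (hp1 : p < 1) :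
    ∑ j ∈ range (n + 1), binomPMF n p j * (1 / ((j : ℝ) + 1))
      = (1 - (1 - p) ^ (n + 1)) / (((n : ℝ) + 1) * p) := by
  set q : ℝ := 1 - p with hq
  have hqp : p + q = 1 := by rw [hq]; ring
  have hNp : ((n : ℝ) + 1) * p ≠ 0 := by positivity
  have h1 : ∀ j ∈ range (n + 1),
      binomPMF n p j * (1 / ((j : ℝ) + 1))
        = (1 / (((n : ℝ) + 1) * p)) * ((((n+1).choose (j+1) : ℕ) : ℝ) * p ^ (j+1) * q ^ (n + 1 - (j+1))) := by
    intro j _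
    unfold binomPMF
    have h := choose_shift n j
    have he : n + 1 - (j + 1) = n - j := by omega
    rw [he]
    have hj : ((j : ℝ) + 1) ≠ 0 := by positivity
    field_simp
    linear_combination (-(p ^ (j + 1) * (1 - p) ^ (n - j))) * h
  rw [Finset.sum_congr rfl h1, ← Finset.mul_sum]
  have h2 : ∑ j ∈ range (n + 1), ((((n+1).choose (j+1) : ℕ) : ℝ) * p ^ (j+1) * q ^ (n + 1 - (j+1)))
      = 1 - q ^ (n + 1) := by
    have h3 := binom_sum (n + 1) p q hqp
    rw [Finset.sum_range_succ'] at h3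
    simp only [Nat.choose_zero_right, Nat.cast_one, pow_zero, Nat.sub_zero, one_mul, mul_one] at h3
    -- h3 : ∑ j ∈ range (n+1), C(n+1, j+1) p^(j+1) q^(n+1-(j+1)) + q^(n+1) = 1
    linarith [h3]
  rw [h2]
  field_simp

lemma sum_pmf_shift2 (n : ℕ) (p : ℝ) (hp : 0 < p) (hp1 : p < 1) (w : ℕ → ℝ)
    (hw : ∀ k, 0 ≤ w k) :
    ∑ j ∈ range (n + 1), binomPMF n p j * (w (j + 2) / (((j : ℝ) + 1) * ((j : ℝ) + 2)))
      ≤ (∑ k ∈ range (n + 3), w k * (((n + 2).choose k : ℕ) : ℝ) * p ^ k * (1 - p) ^ (n + 2 - k))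
          / (((n : ℝ) + 1) * ((n : ℝ) + 2) * p ^ 2) := by
  set q : ℝ := 1 - p with hq
  have hq0 : 0 < q := by rw [hq]; linarith
  set g : ℕ → ℝ := fun k => w k * (((n + 2).choose k : ℕ) : ℝ) * p ^ k * q ^ (n + 2 - k) with hg
  have hD : (0:ℝ) < ((n : ℝ) + 1) * ((n : ℝ) + 2) * p ^ 2 := by positivity
  have hgnn : ∀ k, 0 ≤ g k := by
    intro k; rw [hg]; simp only
    have := hw k; positivity
  have h1 : ∀ j ∈ range (n + 1),
      binomPMF n p j * (w (j + 2) / (((j : ℝ) + 1) * ((j : ℝ) + 2)))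
        = g (j + 2) / (((n : ℝ) + 1) * ((n : ℝ) + 2) * p ^ 2) := by
    intro j _
    unfold binomPMF
    rw [hg]; simp only
    have hc1 := choose_shift n j
    have hc2 := choose_shift (n + 1) (j + 1)
    push_cast at hc2
    have he : n + 2 - (j + 2) = n - j := by omega
    rw [he]
    have hj1 : ((j : ℝ) + 1) ≠ 0 := by positivity
    have hj2 : ((j : ℝ) + 2) ≠ 0 := by positivity
    rw [hq] at *
    rw [eq_div_iff hD.ne']
    have hkey : ((j : ℝ) + 1) * ((j : ℝ) + 2) * (((n + 2).choose (j + 2) : ℕ) : ℝ)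
        = ((n : ℝ) + 1) * ((n : ℝ) + 2) * ((n.choose j : ℕ) : ℝ) := by
      have h3 : ((j : ℝ) + 2) * (((n + 2).choose (j + 2) : ℕ) : ℝ)
          = ((n : ℝ) + 2) * (((n + 1).choose (j + 1) : ℕ) : ℝ) := by
        have := hc2; push_cast; linarith
      calc ((j : ℝ) + 1) * ((j : ℝ) + 2) * (((n + 2).choose (j + 2) : ℕ) : ℝ)
          = ((j : ℝ) + 1) * (((j : ℝ) + 2) * (((n + 2).choose (j + 2) : ℕ) : ℝ)) := by ring
        _ = ((j : ℝ) + 1) * (((n : ℝ) + 2) * (((n + 1).choose (j + 1) : ℕ) : ℝ)) := by rw [h3]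
        _ = ((n : ℝ) + 2) * (((j : ℝ) + 1) * (((n + 1).choose (j + 1) : ℕ) : ℝ)) := by ring
        _ = ((n : ℝ) + 2) * (((n : ℝ) + 1) * ((n.choose j : ℕ) : ℝ)) := by rw [hc1]
        _ = ((n : ℝ) + 1) * ((n : ℝ) + 2) * ((n.choose j : ℕ) : ℝ) := by ring
    field_simp
    linear_combination (-(w (j + 2) * p ^ (j + 2))) * hkey
  rw [Finset.sum_congr rfl h1]
  rw [← Finset.sum_div]
  have e1 := Finset.sum_range_succ' g (n + 2)
  have e2 := Finset.sum_range_succ' (fun k => g (k + 1)) (n + 1)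
  simp only [zero_add] at e2
  have e3 : ∑ j ∈ range (n + 1), g (j + 1 + 1) = ∑ j ∈ range (n + 1), g (j + 2) :=
    Finset.sum_congr rfl fun k _ => rfl
  have hnum : ∑ j ∈ range (n + 1), g (j + 2) ≤ ∑ k ∈ range (n + 3), g k := by
    have := hgnn 0
    have := hgnn 1
    rw [e1, e2, e3]
    linarith
  exact div_le_div_of_nonneg_right hnum hD.le

lemma sum_pmf_invsq (n : ℕ) (p : ℝ) (hp : 0 < p) (hp1 : p < 1) :
    ∑ j ∈ range (n + 1), binomPMF n p j * (1 / (((j : ℝ) + 1) * ((j : ℝ) + 2)))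
      ≤ 1 / (((n : ℝ) + 1) * ((n : ℝ) + 2) * p ^ 2) := by
  have h := sum_pmf_shift2 n p hp hp1 (fun _ => 1) (fun _ => zero_le_one)
  have h2 : ∑ k ∈ range (n + 3), (1 : ℝ) * (((n + 2).choose k : ℕ) : ℝ) * p ^ k * (1 - p) ^ (n + 2 - k)
      = 1 := by
    rw [show (∑ k ∈ range (n + 3), (1:ℝ) * (((n + 2).choose k : ℕ) : ℝ) * p ^ k * (1 - p) ^ (n + 2 - k))
        = ∑ k ∈ range (n + 2 + 1), (((n + 2).choose k : ℕ) : ℝ) * p ^ k * (1 - p) ^ (n + 2 - k) from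
      Finset.sum_congr rfl fun k _ => by ring]
    exact binom_sum (n + 2) p (1 - p) (by ring)
  rw [h2] at h
  exact h

lemma sum_pmf_sq_dev (n : ℕ) (p : ℝ) (hp : 0 < p) (hp1 : p < 1) :
    ∑ j ∈ range (n + 1), binomPMF n p j *
        (((j : ℝ) + 1 - ((n : ℝ) + 1) * p) ^ 2 / (((j : ℝ) + 1) * ((j : ℝ) + 2)))
      ≤ (1 - p) * (((n : ℝ) + 1) * p + 1) / (((n : ℝ) + 1) * ((n : ℝ) + 2) * p ^ 2) := by
  set c : ℝ := 1 + ((n : ℝ) + 1) * p with hc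
  have h := sum_pmf_shift2 n p hp hp1 (fun k => ((k : ℝ) - c) ^ 2) (fun k => sq_nonneg _)
  have hL : ∀ j ∈ range (n + 1),
      binomPMF n p j * ((((j:ℕ)+2 : ℕ) : ℝ) - c) ^ 2 / (((j : ℝ) + 1) * ((j : ℝ) + 2))
        = binomPMF n p j * (((j : ℝ) + 1 - ((n : ℝ) + 1) * p) ^ 2 / (((j : ℝ) + 1) * ((j : ℝ) + 2))) := by
    intro j _
    push_cast
    rw [hc]
    ring
  have h2 : ∑ k ∈ range (n + 3), ((k : ℝ) - c) ^ 2 * (((n + 2).choose k : ℕ) : ℝ) * p ^ k * (1 - p) ^ (n + 2 - k)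
      = (1 - p) * (((n : ℝ) + 1) * p + 1) := by
    rw [binom_sum_sq n p (1 - p) c (by ring), hc]
    ring
  calc ∑ j ∈ range (n + 1), binomPMF n p j *
        (((j : ℝ) + 1 - ((n : ℝ) + 1) * p) ^ 2 / (((j : ℝ) + 1) * ((j : ℝ) + 2)))
      = ∑ j ∈ range (n + 1), binomPMF n p j * (((((j:ℕ)+2 : ℕ) : ℝ) - c) ^ 2 / (((j : ℝ) + 1) * ((j : ℝ) + 2))) := by
        refine Finset.sum_congr rfl fun j _ => ?_
        push_cast
        rw [hc]; ring
    _ ≤ (∑ k ∈ range (n + 3), ((k : ℝ) - c) ^ 2 * (((n + 2).choose k : ℕ) : ℝ) * p ^ k * (1 - p) ^ (n + 2 - k))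
          / (((n : ℝ) + 1) * ((n : ℝ) + 2) * p ^ 2) := h
    _ = (1 - p) * (((n : ℝ) + 1) * p + 1) / (((n : ℝ) + 1) * ((n : ℝ) + 2) * p ^ 2) := by rw [h2]

lemma sum_pmf_reflect (n : ℕ) (p : ℝ) (F : ℕ → ℝ) :
    ∑ j ∈ range (n + 1), binomPMF n p j * F j
      = ∑ j ∈ range (n + 1), binomPMF n (1 - p) j * F (n - j) := by
  rw [← Finset.sum_range_reflect (fun j => binomPMF n p j * F j) (n + 1)]
  refine Finset.sum_congr rfl fun j hj => ?_
  have hjn : j ≤ n := by simpa [Nat.lt_succ_iff] using hj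
  have e1 : n + 1 - 1 - j = n - j := by omega
  rw [e1]
  unfold binomPMF
  have e2 : n.choose (n - j) = n.choose j := Nat.choose_symm hjn
  have e3 : n - (n - j) = j := by omega
  rw [e2, e3, sub_sub_cancel]
  ring

lemma sum_pmf_inv_B (n : ℕ) (p : ℝ) (hp : 0 < p) (hp1 : p < 1) :
    ∑ j ∈ range (n + 1), binomPMF n p j * (1 / ((n : ℝ) + 1 - (j : ℝ)))
      = (1 - p ^ (n + 1)) / (((n : ℝ) + 1) * (1 - p)) := by
  rw [sum_pmf_reflect n p (fun j => 1 / ((n : ℝ) + 1 - (j : ℝ)))]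
  have h1 : ∀ j ∈ range (n + 1),
      binomPMF n (1 - p) j * (1 / ((n : ℝ) + 1 - ((n - j : ℕ) : ℝ)))
        = binomPMF n (1 - p) j * (1 / ((j : ℝ) + 1)) := by
    intro j hj
    have hjn : j ≤ n := by simpa [Nat.lt_succ_iff] using hj
    rw [Nat.cast_sub hjn]
    ring_nf
  rw [Finset.sum_congr rfl h1, sum_pmf_inv n (1 - p) (by linarith) (by linarith),
    sub_sub_cancel]

lemma sum_pmf_invsq_B (n : ℕ) (p : ℝ) (hp : 0 < p) (hp1 : p < 1) :
    ∑ j ∈ range (n + 1), binomPMF n p j *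
        (1 / (((n : ℝ) + 1 - (j : ℝ)) * ((n : ℝ) + 2 - (j : ℝ))))
      ≤ 1 / (((n : ℝ) + 1) * ((n : ℝ) + 2) * (1 - p) ^ 2) := by
  rw [sum_pmf_reflect n p (fun j => 1 / (((n : ℝ) + 1 - (j : ℝ)) * ((n : ℝ) + 2 - (j : ℝ))))]
  have h1 : ∀ j ∈ range (n + 1),
      binomPMF n (1 - p) j * (1 / (((n : ℝ) + 1 - ((n - j : ℕ) : ℝ)) * ((n : ℝ) + 2 - ((n - j : ℕ) : ℝ))))
        = binomPMF n (1 - p) j * (1 / (((j : ℝ) + 1) * ((j : ℝ) + 2))) := by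
    intro j hj
    have hjn : j ≤ n := by simpa [Nat.lt_succ_iff] using hj
    rw [Nat.cast_sub hjn]
    ring_nf
  rw [Finset.sum_congr rfl h1]
  exact sum_pmf_invsq n (1 - p) (by linarith) (by linarith)

lemma sum_pmf_sq_dev_B (n : ℕ) (p : ℝ) (hp : 0 < p) (hp1 : p < 1) :
    ∑ j ∈ range (n + 1), binomPMF n p j *
        (((j : ℝ) - ((n : ℝ) + 1) * p) ^ 2 / (((n : ℝ) + 1 - (j : ℝ)) * ((n : ℝ) + 2 - (j : ℝ))))
      ≤ p * (((n : ℝ) + 1) * (1 - p) + 1) / (((n : ℝ) + 1) * ((n : ℝ) + 2) * (1 - p) ^ 2) := by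
  rw [sum_pmf_reflect n p
    (fun j => ((j : ℝ) - ((n : ℝ) + 1) * p) ^ 2 / (((n : ℝ) + 1 - (j : ℝ)) * ((n : ℝ) + 2 - (j : ℝ))))]
  have h1 : ∀ j ∈ range (n + 1),
      binomPMF n (1 - p) j *
          ((((n - j : ℕ) : ℝ) - ((n : ℝ) + 1) * p) ^ 2
            / (((n : ℝ) + 1 - ((n - j : ℕ) : ℝ)) * ((n : ℝ) + 2 - ((n - j : ℕ) : ℝ))))
        = binomPMF n (1 - p) j *
            (((j : ℝ) + 1 - ((n : ℝ) + 1) * (1 - p)) ^ 2 / (((j : ℝ) + 1) * ((j : ℝ) + 2))) := by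
    intro j hj
    have hjn : j ≤ n := by simpa [Nat.lt_succ_iff] using hj
    rw [Nat.cast_sub hjn]
    have : ((n : ℝ) - (j : ℝ) - ((n : ℝ) + 1) * p) ^ 2
        = ((j : ℝ) + 1 - ((n : ℝ) + 1) * (1 - p)) ^ 2 := by ring
    rw [this]
    have e2 : (n : ℝ) + 1 - ((n : ℝ) - (j : ℝ)) = (j : ℝ) + 1 := by ring
    have e3 : (n : ℝ) + 2 - ((n : ℝ) - (j : ℝ)) = (j : ℝ) + 2 := by ring
    rw [e2, e3]
  rw [Finset.sum_congr rfl h1]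
  have h := sum_pmf_sq_dev n (1 - p) (by linarith) (by linarith)
  rw [sub_sub_cancel] at h
  exact h

lemma poly_exp_bound (x : ℝ) (hx : 2 ≤ x) : 9 * x ^ 2 ≤ 8 * Real.exp x := by
  have h5 : 1 + x / 5 ≤ Real.exp (x / 5) := by
    have := Real.add_one_le_exp (x / 5); linarith
  have h50 : (0:ℝ) ≤ 1 + x / 5 := by linarith
  have hpow : (1 + x / 5) ^ 5 ≤ Real.exp (x / 5) ^ 5 := pow_le_pow_left₀ h50 h5 5
  have hexp : Real.exp (x / 5) ^ 5 = Real.exp x := by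
    rw [← Real.exp_nat_mul]
    congr 1
    push_cast
    ring
  rw [hexp] at hpow
  nlinarith [sq_nonneg (x - 2), sq_nonneg x, sq_nonneg (x - 10/3), sq_nonneg (x^2 - 4)]

lemma tail_bound (M : ℕ) (p : ℝ) (hp : 0 < p) (hp1 : p < 1)
    (h2 : 2 ≤ (M : ℝ) * p) (h8 : 8 ≤ (M : ℝ)) :
    (M : ℝ) * ((M : ℝ) + 1) * p ^ 2 * (1 - p) ^ M ≤ 1 := by
  have hM0 : (0:ℝ) < M := by linarith
  have hqe : (1 - p) ≤ Real.exp (-p) := by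
    have := Real.add_one_le_exp (-p); linarith
  have hqN : (1 - p) ^ M ≤ Real.exp (-p) ^ M := pow_le_pow_left₀ (by linarith) hqe M
  have hexp : Real.exp (-p) ^ M = Real.exp (-((M : ℝ) * p)) := by
    rw [← Real.exp_nat_mul]; ring_nf
  rw [hexp] at hqN
  have hkey : 9 * ((M : ℝ) * p) ^ 2 ≤ 8 * Real.exp ((M : ℝ) * p) := poly_exp_bound _ h2
  have hE : (0:ℝ) < Real.exp ((M : ℝ) * p) := Real.exp_pos _
  have hMN : (M : ℝ) * ((M : ℝ) + 1) * p ^ 2 ≤ (9 / 8) * ((M : ℝ) * p) ^ 2 := by nlinarith [sq_nonneg p]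
  have step : (M : ℝ) * ((M : ℝ) + 1) * p ^ 2 * Real.exp (-((M : ℝ) * p)) ≤ 1 := by
    rw [Real.exp_neg, ← div_eq_mul_inv, div_le_one hE]
    nlinarith
  calc (M : ℝ) * ((M : ℝ) + 1) * p ^ 2 * (1 - p) ^ M
      ≤ (M : ℝ) * ((M : ℝ) + 1) * p ^ 2 * Real.exp (-((M : ℝ) * p)) := by
        apply mul_le_mul_of_nonneg_left hqN
        positivity
    _ ≤ 1 := step

lemma sum_pmf_one (n : ℕ) (p : ℝ) :
    ∑ j ∈ range (n + 1), binomPMF n p j = 1 := by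
  unfold binomPMF
  exact binom_sum n p (1 - p) (by ring)

-- the pointwise inequality, pure-real part
lemma pointwise_bound (n j : ℕ) (p : ℝ) (hp : 0 < p) (hp1 : p < 1)
    (hj : (j : ℝ) ≤ (n : ℝ)) :
    (Real.log (1 + 1 / ((j : ℝ) + 1)) + Real.log (1 + 1 / ((n : ℝ) + 1 - (j : ℝ)))
        - 1 / (((n : ℝ) + 1) * p * (1 - p))) ^ 2
    ≤ 2 * (1 / (((n : ℝ) + 1) * p)) ^ 2 *
          (((j : ℝ) + 1 - ((n : ℝ) + 1) * p) ^ 2 / (((j : ℝ) + 1) * ((j : ℝ) + 2)))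
      + 2 * (1 / (((n : ℝ) + 1) * (1 - p))) ^ 2 *
          (((j : ℝ) - ((n : ℝ) + 1) * p) ^ 2 / (((n : ℝ) + 1 - (j : ℝ)) * ((n : ℝ) + 2 - (j : ℝ))))
      + (2 / ((n : ℝ) + 2)) * (1 / ((j : ℝ) + 1))
      + (2 / ((n : ℝ) + 2)) * (1 / ((n : ℝ) + 1 - (j : ℝ)))
      - 2 * (1 / (((n : ℝ) + 1) * (1 - p))) * (1 / ((j : ℝ) + 1))
      - 2 * (1 / (((n : ℝ) + 1) * p)) * (1 / ((n : ℝ) + 1 - (j : ℝ)))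
      + 2 * (1 / (((n : ℝ) + 1) * p)) * (1 / (((n : ℝ) + 1) * (1 - p)))
      + 2 * (1 / (((n : ℝ) + 1) * p * (1 - p))) * (1 / (((j : ℝ) + 1) * ((j : ℝ) + 2)))
      + 2 * (1 / (((n : ℝ) + 1) * p * (1 - p))) *
          (1 / (((n : ℝ) + 1 - (j : ℝ)) * ((n : ℝ) + 2 - (j : ℝ)))) := by
  have hq : (0 : ℝ) < 1 - p := by linarith
  set x : ℝ := (j : ℝ) with hxdef
  have hx0 : (0 : ℝ) ≤ x := Nat.cast_nonneg j
  have hd1 : (0 : ℝ) < x + 1 := by linarith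
  have hd2 : (0 : ℝ) < x + 2 := by linarith
  have hd3 : (1 : ℝ) ≤ (n : ℝ) + 1 - x := by linarith
  have hd3' : (0 : ℝ) < (n : ℝ) + 1 - x := by linarith
  have hd4 : (0 : ℝ) < (n : ℝ) + 2 - x := by linarith
  have hNr0 : (0 : ℝ) < (n : ℝ) + 1 := by linarith
  set a : ℝ := 1 / (x + 1) with hadef
  set b : ℝ := 1 / ((n : ℝ) + 1 - x) with hbdef
  set lam : ℝ := 1 / (((n : ℝ) + 1) * p) with hlamdef
  set nu : ℝ := 1 / (((n : ℝ) + 1) * (1 - p)) with hnudef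
  set m : ℝ := 1 / (((n : ℝ) + 1) * p * (1 - p)) with hmdef
  have ha0 : 0 < a := by rw [hadef]; positivity
  have hb0 : 0 < b := by rw [hbdef]; positivity
  have hm0 : 0 < m := by rw [hmdef]; positivity
  have hm : m = lam + nu := by rw [hmdef, hlamdef, hnudef]; field_simp; ring
  set LA : ℝ := Real.log (1 + a) with hLAdef
  set LB : ℝ := Real.log (1 + b) with hLBdef
  have hLA0 : 0 ≤ LA := Real.log_nonneg (by linarith)
  have hLB0 : 0 ≤ LB := Real.log_nonneg (by linarith)
  have hLA1 : LA ≤ a := by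
    have := Real.log_le_sub_one_of_pos (show (0:ℝ) < 1 + a by linarith)
    linarith
  have hLB1 : LB ≤ b := by
    have := Real.log_le_sub_one_of_pos (show (0:ℝ) < 1 + b by linarith)
    linarith
  have hLA2 : a - 1 / ((x + 1) * (x + 2)) ≤ LA := by
    have h1 : (0:ℝ) < (1 + a)⁻¹ := by positivity
    have h2 := Real.log_le_sub_one_of_pos h1
    rw [Real.log_inv] at h2
    have h3 : 1 - (1 + a)⁻¹ = a - 1 / ((x + 1) * (x + 2)) := by
      rw [hadef]; rw [show 1 + 1 / (x + 1) = (x + 2) / (x + 1) by field_simp; ring]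
      rw [inv_div]
      field_simp
      ring
    linarith
  have hLB2 : b - 1 / (((n : ℝ) + 1 - x) * ((n : ℝ) + 2 - x)) ≤ LB := by
    have h1 : (0:ℝ) < (1 + b)⁻¹ := by positivity
    have h2 := Real.log_le_sub_one_of_pos h1
    rw [Real.log_inv] at h2
    have h3 : 1 - (1 + b)⁻¹ = b - 1 / (((n : ℝ) + 1 - x) * ((n : ℝ) + 2 - x)) := by
      rw [hbdef]
      rw [show 1 + 1 / ((n : ℝ) + 1 - x) = ((n : ℝ) + 2 - x) / ((n : ℝ) + 1 - x) by field_simp; ring]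
      rw [inv_div]
      field_simp
      ring
    linarith
  -- step 1 : (L-m)^2 ≤ (S-m)^2 + 2m(S-L)
  have c1 : (LA + LB - m) ^ 2 ≤ (a + b - m) ^ 2 + 2 * m * ((a + b) - (LA + LB)) := by
    nlinarith [mul_nonneg (show (0:ℝ) ≤ (a + b) - (LA + LB) by linarith)
      (show (0:ℝ) ≤ (a + b) + (LA + LB) by linarith)]
  -- step 2 : 2m(S-L) ≤ 2m(U2A + U2B)
  have c2 : 2 * m * ((a + b) - (LA + LB))
      ≤ 2 * m * (1 / ((x + 1) * (x + 2)) + 1 / (((n : ℝ) + 1 - x) * ((n : ℝ) + 2 - x))) := by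
    apply mul_le_mul_of_nonneg_left _ (by positivity)
    linarith
  -- step 3 : expansion of (S-m)^2
  have hab : a * b = (a + b) / ((n : ℝ) + 2) := by
    rw [hadef, hbdef]
    field_simp
    ring
  have c3 : (a + b - m) ^ 2
      = (a - lam) ^ 2 + (b - nu) ^ 2 + 2 * (a * b) - 2 * nu * a - 2 * lam * b + 2 * lam * nu := by
    linear_combination (m - lam - nu - 2 * (a - lam) - 2 * (b - nu)) * hm
  -- step 4 : square bounds
  have c4 : (a - lam) ^ 2 ≤ 2 * lam ^ 2 * ((x + 1 - ((n : ℝ) + 1) * p) ^ 2 / ((x + 1) * (x + 2))) := by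
    have hdiff : 2 * lam ^ 2 * ((x + 1 - ((n : ℝ) + 1) * p) ^ 2 / ((x + 1) * (x + 2))) - (a - lam) ^ 2
        = (x + 1 - ((n : ℝ) + 1) * p) ^ 2 * x / ((x + 1) ^ 2 * (x + 2) * (((n : ℝ) + 1) * p) ^ 2) := by
      rw [hadef, hlamdef]
      field_simp
      ring
    nlinarith [div_nonneg (mul_nonneg (sq_nonneg (x + 1 - ((n : ℝ) + 1) * p)) hx0)
      (by positivity : (0:ℝ) ≤ (x + 1) ^ 2 * (x + 2) * (((n : ℝ) + 1) * p) ^ 2)]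
  have c5 : (b - nu) ^ 2 ≤ 2 * nu ^ 2 * ((x - ((n : ℝ) + 1) * p) ^ 2 / (((n : ℝ) + 1 - x) * ((n : ℝ) + 2 - x))) := by
    have hdiff : 2 * nu ^ 2 * ((x - ((n : ℝ) + 1) * p) ^ 2 / (((n : ℝ) + 1 - x) * ((n : ℝ) + 2 - x))) - (b - nu) ^ 2
        = (x - ((n : ℝ) + 1) * p) ^ 2 * ((n : ℝ) - x)
            / (((n : ℝ) + 1 - x) ^ 2 * ((n : ℝ) + 2 - x) * (((n : ℝ) + 1) * (1 - p)) ^ 2) := by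
      rw [hbdef, hnudef]
      field_simp
      ring
    nlinarith [div_nonneg (mul_nonneg (sq_nonneg (x - ((n : ℝ) + 1) * p)) (by linarith : (0:ℝ) ≤ (n : ℝ) - x))
      (by positivity : (0:ℝ) ≤ ((n : ℝ) + 1 - x) ^ 2 * ((n : ℝ) + 2 - x) * (((n : ℝ) + 1) * (1 - p)) ^ 2)]
  -- assemble
  have c3' : (a + b - m) ^ 2
      = (a - lam) ^ 2 + (b - nu) ^ 2 + (2 / ((n : ℝ) + 2)) * a + (2 / ((n : ℝ) + 2)) * b
        - 2 * nu * a - 2 * lam * b + 2 * lam * nu := by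
    rw [c3, hab]; ring
  linarith [c1, c2, c3', c4, c5]


lemma final_scalar (n : ℕ) (p : ℝ) (hp : 0 < p) (hp1 : p < 1)
    (hq : (0:ℝ) < 1 - p) (hn0 : (0:ℝ) ≤ (n : ℝ))
    (hNpq : 2 ≤ ((n:ℝ)+1) * p * (1-p))
    (hF1 : ((n:ℝ)+1) * ((n:ℝ)+2) * p^2 * (1-p)^(n+1) ≤ 1)
    (hF2 : ((n:ℝ)+1) * ((n:ℝ)+2) * (1-p)^2 * p^(n+1) ≤ 1) :
    2*(1/(((n:ℝ)+1)*p))^2 * ((1-p)*(((n:ℝ)+1)*p+1)/(((n:ℝ)+1)*((n:ℝ)+2)*p^2))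
    + 2*(1/(((n:ℝ)+1)*(1-p)))^2 * (p*(((n:ℝ)+1)*(1-p)+1)/(((n:ℝ)+1)*((n:ℝ)+2)*(1-p)^2))
    + (2/((n:ℝ)+2)) * ((1-(1-p)^(n+1))/(((n:ℝ)+1)*p))
    + (2/((n:ℝ)+2)) * ((1-p^(n+1))/(((n:ℝ)+1)*(1-p)))
    - 2*(1/(((n:ℝ)+1)*(1-p))) * ((1-(1-p)^(n+1))/(((n:ℝ)+1)*p))
    - 2*(1/(((n:ℝ)+1)*p)) * ((1-p^(n+1))/(((n:ℝ)+1)*(1-p)))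
    + 2*(1/(((n:ℝ)+1)*p)) * (1/(((n:ℝ)+1)*(1-p))) * 1
    + 2*(1/(((n:ℝ)+1)*p*(1-p))) * (1/(((n:ℝ)+1)*((n:ℝ)+2)*p^2))
    + 2*(1/(((n:ℝ)+1)*p*(1-p))) * (1/(((n:ℝ)+1)*((n:ℝ)+2)*(1-p)^2))
    ≤ (3*p^3+3*(1-p)^3+2*p^2+2*(1-p)^2)/(((n:ℝ)+1)^3*p^3*(1-p)^3) := by
  set R : ℝ := (n : ℝ) + 1 with hRdef
  have hR0 : (0:ℝ) < R := by rw [hRdef]; linarith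
  have hM0 : (0:ℝ) < (n:ℝ) + 2 := by linarith
  have hRM : R ≤ (n:ℝ) + 2 := by rw [hRdef]; linarith
  set QN : ℝ := (1-p)^(n+1) with hQNdef
  set PN : ℝ := p^(n+1) with hPNdef
  have hQN0 : 0 ≤ QN := by rw [hQNdef]; positivity
  have hPN0 : 0 ≤ PN := by rw [hPNdef]; positivity
  have hQNb : QN ≤ 1/(R*((n:ℝ)+2)*p^2) := by
    rw [le_div_iff₀ (by positivity)]
    nlinarith [hF1]
  have hPNb : PN ≤ 1/(R*((n:ℝ)+2)*(1-p)^2) := by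
    rw [le_div_iff₀ (by positivity)]
    nlinarith [hF2]
  -- Packet 1
  have hb2 : 2*(1-p) ≤ (1-p)^2*(((n:ℝ)+2)*p) := by nlinarith [mul_le_mul_of_nonneg_right (mul_le_mul_of_nonneg_right hRM hp.le) hq.le]
  have hnum1 : 0 ≤ 3*((n:ℝ)+2)*p - 2*(1-p)*(R*p+1) := by nlinarith [mul_nonneg hp.le (sq_nonneg (1-p)), mul_nonneg (mul_nonneg hp.le hq.le) hq.le]
  have hP1 : 2*(1/(R*p))^2 * ((1-p)*(R*p+1)/(R*((n:ℝ)+2)*p^2)) ≤ 3/(R^3*p^3) := by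
    have hdiff : 3/(R^3*p^3) - 2*(1/(R*p))^2 * ((1-p)*(R*p+1)/(R*((n:ℝ)+2)*p^2))
        = (3*((n:ℝ)+2)*p - 2*(1-p)*(R*p+1))/(R^3*((n:ℝ)+2)*p^4) := by
      field_simp
    nlinarith [div_nonneg hnum1 (by positivity : (0:ℝ) ≤ R^3*((n:ℝ)+2)*p^4)]
  have hb2' : 2*p ≤ p^2*(((n:ℝ)+2)*(1-p)) := by nlinarith [mul_le_mul_of_nonneg_right (mul_le_mul_of_nonneg_right hRM hq.le) hp.le]
  have hnum2 : 0 ≤ 3*((n:ℝ)+2)*(1-p) - 2*p*(R*(1-p)+1) := by nlinarith [mul_nonneg hq.le (sq_nonneg p), mul_nonneg (mul_nonneg hq.le hp.le) hp.le]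
  have hP2 : 2*(1/(R*(1-p)))^2 * (p*(R*(1-p)+1)/(R*((n:ℝ)+2)*(1-p)^2)) ≤ 3/(R^3*(1-p)^3) := by
    have hdiff : 3/(R^3*(1-p)^3) - 2*(1/(R*(1-p)))^2 * (p*(R*(1-p)+1)/(R*((n:ℝ)+2)*(1-p)^2))
        = (3*((n:ℝ)+2)*(1-p) - 2*p*(R*(1-p)+1))/(R^3*((n:ℝ)+2)*(1-p)^4) := by
      field_simp
    nlinarith [div_nonneg hnum2 (by positivity : (0:ℝ) ≤ R^3*((n:ℝ)+2)*(1-p)^4)]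
  -- Packet 3 pieces
  have e1 : (2/((n:ℝ)+2)) * ((1-QN)/(R*p)) ≤ 2/(((n:ℝ)+2)*R*p) := by
    have h1 : (1-QN)/(R*p) ≤ 1/(R*p) :=
      div_le_div_of_nonneg_right (by linarith) (by positivity) |>.trans_eq rfl
    have h2 := mul_le_mul_of_nonneg_left h1 (by positivity : (0:ℝ) ≤ 2/((n:ℝ)+2))
    calc (2/((n:ℝ)+2)) * ((1-QN)/(R*p)) ≤ (2/((n:ℝ)+2)) * (1/(R*p)) := h2
      _ = 2/(((n:ℝ)+2)*R*p) := by field_simp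
  have e1' : (2/((n:ℝ)+2)) * ((1-PN)/(R*(1-p))) ≤ 2/(((n:ℝ)+2)*R*(1-p)) := by
    have h1 : (1-PN)/(R*(1-p)) ≤ 1/(R*(1-p)) :=
      div_le_div_of_nonneg_right (by linarith) (by positivity) |>.trans_eq rfl
    have h2 := mul_le_mul_of_nonneg_left h1 (by positivity : (0:ℝ) ≤ 2/((n:ℝ)+2))
    calc (2/((n:ℝ)+2)) * ((1-PN)/(R*(1-p))) ≤ (2/((n:ℝ)+2)) * (1/(R*(1-p))) := h2
      _ = 2/(((n:ℝ)+2)*R*(1-p)) := by field_simp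
  have e2 : 2*(1/(R*(1-p))) * ((1-QN)/(R*p)) = 2/(R^2*p*(1-p)) - 2*QN/(R^2*p*(1-p)) := by
    field_simp
  have e3 : 2*(1/(R*p)) * ((1-PN)/(R*(1-p))) = 2/(R^2*p*(1-p)) - 2*PN/(R^2*p*(1-p)) := by
    field_simp
  have e4 : 2*(1/(R*p)) * (1/(R*(1-p))) * 1 = 2/(R^2*p*(1-p)) := by
    field_simp
  have e5 : 2*(1/(R*p*(1-p))) * (1/(R*((n:ℝ)+2)*p^2)) = 2/(R^2*((n:ℝ)+2)*p^3*(1-p)) := by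
    field_simp
  have e6 : 2*(1/(R*p*(1-p))) * (1/(R*((n:ℝ)+2)*(1-p)^2)) = 2/(R^2*((n:ℝ)+2)*(1-p)^3*p) := by
    field_simp
  have g1 : 2/(((n:ℝ)+2)*R*p) + 2/(((n:ℝ)+2)*R*(1-p)) = 2/(((n:ℝ)+2)*R*p*(1-p)) := by
    field_simp
    ring
  have g2 : 2/(((n:ℝ)+2)*R*p*(1-p)) ≤ 2/(R^2*p*(1-p)) := by
    rw [div_le_div_iff₀ (by positivity) (by positivity)]
    nlinarith [mul_pos hp hq, mul_pos (mul_pos hR0 hp) hq]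
  have g3 : 2*QN/(R^2*p*(1-p)) ≤ 2/(R^3*((n:ℝ)+2)*p^3*(1-p)) := by
    have h1 := mul_le_mul_of_nonneg_right hQNb (by positivity : (0:ℝ) ≤ 2/(R^2*p*(1-p)))
    calc 2*QN/(R^2*p*(1-p)) = QN * (2/(R^2*p*(1-p))) := by ring
      _ ≤ (1/(R*((n:ℝ)+2)*p^2)) * (2/(R^2*p*(1-p))) := h1
      _ = 2/(R^3*((n:ℝ)+2)*p^3*(1-p)) := by field_simp
  have g3' : 2*PN/(R^2*p*(1-p)) ≤ 2/(R^3*((n:ℝ)+2)*(1-p)^3*p) := by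
    have h1 := mul_le_mul_of_nonneg_right hPNb (by positivity : (0:ℝ) ≤ 2/(R^2*p*(1-p)))
    calc 2*PN/(R^2*p*(1-p)) = PN * (2/(R^2*p*(1-p))) := by ring
      _ ≤ (1/(R*((n:ℝ)+2)*(1-p)^2)) * (2/(R^2*p*(1-p))) := h1
      _ = 2/(R^3*((n:ℝ)+2)*(1-p)^3*p) := by field_simp
  have g4 : 2/(R^3*((n:ℝ)+2)*p^3*(1-p)) + 2/(R^2*((n:ℝ)+2)*p^3*(1-p)) = 2/(R^3*p^3*(1-p)) := by
    rw [hRdef]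
    field_simp
    ring
  have g4' : 2/(R^3*((n:ℝ)+2)*(1-p)^3*p) + 2/(R^2*((n:ℝ)+2)*(1-p)^3*p) = 2/(R^3*(1-p)^3*p) := by
    rw [hRdef]
    field_simp
    ring
  have hRHS : 3/(R^3*p^3) + 3/(R^3*(1-p)^3) + 2/(R^3*p^3*(1-p)) + 2/(R^3*(1-p)^3*p)
      = (3*p^3+3*(1-p)^3+2*p^2+2*(1-p)^2)/(R^3*p^3*(1-p)^3) := by
    field_simp
    ring
  linarith [hP1, hP2, e1, e1', e2, e3, e4, e5, e6, g1, g2, g3, g3', g4, g4', hRHS]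


/-- second-moment bound for `w ~ Bin(N-1, p)` with `Np(1-p) ≥ 2`:
`E[(log(1 + 1/(w+1)) + log(1 + 1/(N-w)) - 1/(Np(1-p)))²]
  ≤ (3p³ + 3(1-p)³ + 2p² + 2(1-p)²) / (N³p³(1-p)³)`. -/
theorem binomial_log_second_moment_bound
    (N : ℕ) (hN : 2 ≤ N) (p : ℝ) (hp : 0 < p) (hp1 : p < 1)
    (hNp : 2 ≤ (N : ℝ) * p * (1 - p)) :
    ∑ j ∈ Finset.range N, binomPMF (N - 1) p j *
        (Real.log (1 + 1 / ((j : ℝ) + 1)) + Real.log (1 + 1 / ((N : ℝ) - j))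
          - 1 / ((N : ℝ) * p * (1 - p))) ^ 2
      ≤ (3 * p ^ 3 + 3 * (1 - p) ^ 3 + 2 * p ^ 2 + 2 * (1 - p) ^ 2)
          / ((N : ℝ) ^ 3 * p ^ 3 * (1 - p) ^ 3) := by
  obtain ⟨n, rfl⟩ : ∃ n, N = n + 1 := ⟨N - 1, by omega⟩
  simp only [Nat.add_sub_cancel]
  push_cast
  push_cast at hNp
  have hn0 : (0 : ℝ) ≤ (n : ℝ) := Nat.cast_nonneg n
  have hq : (0 : ℝ) < 1 - p := by linarith
  have hNr0 : (0 : ℝ) < (n : ℝ) + 1 := by linarith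
  have hNp2 : 2 ≤ ((n : ℝ) + 1) * p := by nlinarith
  have hNq2 : 2 ≤ ((n : ℝ) + 1) * (1 - p) := by nlinarith
  have hN8 : (8 : ℝ) ≤ (n : ℝ) + 1 := by nlinarith [sq_nonneg (p - (1 - p))]
  have hF1 : ((n : ℝ) + 1) * ((n : ℝ) + 2) * p ^ 2 * (1 - p) ^ (n + 1) ≤ 1 := by
    have h := tail_bound (n + 1) p hp hp1 (by push_cast; linarith) (by push_cast; linarith)
    push_cast at h
    linarith
  have hF2 : ((n : ℝ) + 1) * ((n : ℝ) + 2) * (1 - p) ^ 2 * p ^ (n + 1) ≤ 1 := by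
    have h := tail_bound (n + 1) (1 - p) hq (by linarith) (by push_cast; linarith)
      (by push_cast; linarith)
    rw [sub_sub_cancel] at h
    push_cast at h
    linarith
  -- abbreviations (as plain terms)
  -- lam = 1/((n+1)p), nu = 1/((n+1)(1-p)), m = 1/((n+1)p(1-p))
  -- pointwise bound
  have key : ∀ j ∈ range (n + 1),
      binomPMF n p j *
        (Real.log (1 + 1 / ((j : ℝ) + 1)) + Real.log (1 + 1 / ((n : ℝ) + 1 - (j : ℝ)))
          - 1 / (((n : ℝ) + 1) * p * (1 - p))) ^ 2
      ≤ 2 * (1 / (((n : ℝ) + 1) * p)) ^ 2 *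
            (binomPMF n p j * (((j : ℝ) + 1 - ((n : ℝ) + 1) * p) ^ 2 / (((j : ℝ) + 1) * ((j : ℝ) + 2))))
        + 2 * (1 / (((n : ℝ) + 1) * (1 - p))) ^ 2 *
            (binomPMF n p j * (((j : ℝ) - ((n : ℝ) + 1) * p) ^ 2 / (((n : ℝ) + 1 - (j : ℝ)) * ((n : ℝ) + 2 - (j : ℝ)))))
        + (2 / ((n : ℝ) + 2)) * (binomPMF n p j * (1 / ((j : ℝ) + 1)))
        + (2 / ((n : ℝ) + 2)) * (binomPMF n p j * (1 / ((n : ℝ) + 1 - (j : ℝ))))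
        - 2 * (1 / (((n : ℝ) + 1) * (1 - p))) * (binomPMF n p j * (1 / ((j : ℝ) + 1)))
        - 2 * (1 / (((n : ℝ) + 1) * p)) * (binomPMF n p j * (1 / ((n : ℝ) + 1 - (j : ℝ))))
        + 2 * (1 / (((n : ℝ) + 1) * p)) * (1 / (((n : ℝ) + 1) * (1 - p))) * binomPMF n p j
        + 2 * (1 / (((n : ℝ) + 1) * p * (1 - p))) *
            (binomPMF n p j * (1 / (((j : ℝ) + 1) * ((j : ℝ) + 2))))
        + 2 * (1 / (((n : ℝ) + 1) * p * (1 - p))) *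
            (binomPMF n p j * (1 / (((n : ℝ) + 1 - (j : ℝ)) * ((n : ℝ) + 2 - (j : ℝ))))) := by
    intro j hj
    have hjn : (j : ℝ) ≤ (n : ℝ) := by
      have := Nat.lt_succ_iff.mp (Finset.mem_range.mp hj)
      exact_mod_cast this
    have h := pointwise_bound n j p hp hp1 hjn
    have hpm : 0 ≤ binomPMF n p j := pmf_nonneg hp hp1 j
    calc binomPMF n p j *
        (Real.log (1 + 1 / ((j : ℝ) + 1)) + Real.log (1 + 1 / ((n : ℝ) + 1 - (j : ℝ)))
          - 1 / (((n : ℝ) + 1) * p * (1 - p))) ^ 2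
        ≤ binomPMF n p j * (2 * (1 / (((n : ℝ) + 1) * p)) ^ 2 *
            (((j : ℝ) + 1 - ((n : ℝ) + 1) * p) ^ 2 / (((j : ℝ) + 1) * ((j : ℝ) + 2)))
          + 2 * (1 / (((n : ℝ) + 1) * (1 - p))) ^ 2 *
              (((j : ℝ) - ((n : ℝ) + 1) * p) ^ 2 / (((n : ℝ) + 1 - (j : ℝ)) * ((n : ℝ) + 2 - (j : ℝ))))
          + (2 / ((n : ℝ) + 2)) * (1 / ((j : ℝ) + 1))
          + (2 / ((n : ℝ) + 2)) * (1 / ((n : ℝ) + 1 - (j : ℝ)))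
          - 2 * (1 / (((n : ℝ) + 1) * (1 - p))) * (1 / ((j : ℝ) + 1))
          - 2 * (1 / (((n : ℝ) + 1) * p)) * (1 / ((n : ℝ) + 1 - (j : ℝ)))
          + 2 * (1 / (((n : ℝ) + 1) * p)) * (1 / (((n : ℝ) + 1) * (1 - p)))
          + 2 * (1 / (((n : ℝ) + 1) * p * (1 - p))) * (1 / (((j : ℝ) + 1) * ((j : ℝ) + 2)))
          + 2 * (1 / (((n : ℝ) + 1) * p * (1 - p))) *
              (1 / (((n : ℝ) + 1 - (j : ℝ)) * ((n : ℝ) + 2 - (j : ℝ))))) :=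
          mul_le_mul_of_nonneg_left h hpm
      _ = _ := by ring
  calc ∑ j ∈ range (n + 1), binomPMF n p j *
        (Real.log (1 + 1 / ((j : ℝ) + 1)) + Real.log (1 + 1 / ((n : ℝ) + 1 - (j : ℝ)))
          - 1 / (((n : ℝ) + 1) * p * (1 - p))) ^ 2
      ≤ ∑ j ∈ range (n + 1), (2 * (1 / (((n : ℝ) + 1) * p)) ^ 2 *
            (binomPMF n p j * (((j : ℝ) + 1 - ((n : ℝ) + 1) * p) ^ 2 / (((j : ℝ) + 1) * ((j : ℝ) + 2))))
        + 2 * (1 / (((n : ℝ) + 1) * (1 - p))) ^ 2 *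
            (binomPMF n p j * (((j : ℝ) - ((n : ℝ) + 1) * p) ^ 2 / (((n : ℝ) + 1 - (j : ℝ)) * ((n : ℝ) + 2 - (j : ℝ)))))
        + (2 / ((n : ℝ) + 2)) * (binomPMF n p j * (1 / ((j : ℝ) + 1)))
        + (2 / ((n : ℝ) + 2)) * (binomPMF n p j * (1 / ((n : ℝ) + 1 - (j : ℝ))))
        - 2 * (1 / (((n : ℝ) + 1) * (1 - p))) * (binomPMF n p j * (1 / ((j : ℝ) + 1)))
        - 2 * (1 / (((n : ℝ) + 1) * p)) * (binomPMF n p j * (1 / ((n : ℝ) + 1 - (j : ℝ))))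
        + 2 * (1 / (((n : ℝ) + 1) * p)) * (1 / (((n : ℝ) + 1) * (1 - p))) * binomPMF n p j
        + 2 * (1 / (((n : ℝ) + 1) * p * (1 - p))) *
            (binomPMF n p j * (1 / (((j : ℝ) + 1) * ((j : ℝ) + 2))))
        + 2 * (1 / (((n : ℝ) + 1) * p * (1 - p))) *
            (binomPMF n p j * (1 / (((n : ℝ) + 1 - (j : ℝ)) * ((n : ℝ) + 2 - (j : ℝ)))))) :=
        Finset.sum_le_sum key
    _ = 2 * (1 / (((n : ℝ) + 1) * p)) ^ 2 *
            (∑ j ∈ range (n + 1), binomPMF n p j * (((j : ℝ) + 1 - ((n : ℝ) + 1) * p) ^ 2 / (((j : ℝ) + 1) * ((j : ℝ) + 2))))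
        + 2 * (1 / (((n : ℝ) + 1) * (1 - p))) ^ 2 *
            (∑ j ∈ range (n + 1), binomPMF n p j * (((j : ℝ) - ((n : ℝ) + 1) * p) ^ 2 / (((n : ℝ) + 1 - (j : ℝ)) * ((n : ℝ) + 2 - (j : ℝ)))))
        + (2 / ((n : ℝ) + 2)) * (∑ j ∈ range (n + 1), binomPMF n p j * (1 / ((j : ℝ) + 1)))
        + (2 / ((n : ℝ) + 2)) * (∑ j ∈ range (n + 1), binomPMF n p j * (1 / ((n : ℝ) + 1 - (j : ℝ))))
        - 2 * (1 / (((n : ℝ) + 1) * (1 - p))) * (∑ j ∈ range (n + 1), binomPMF n p j * (1 / ((j : ℝ) + 1)))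
        - 2 * (1 / (((n : ℝ) + 1) * p)) * (∑ j ∈ range (n + 1), binomPMF n p j * (1 / ((n : ℝ) + 1 - (j : ℝ))))
        + 2 * (1 / (((n : ℝ) + 1) * p)) * (1 / (((n : ℝ) + 1) * (1 - p))) * (∑ j ∈ range (n + 1), binomPMF n p j)
        + 2 * (1 / (((n : ℝ) + 1) * p * (1 - p))) *
            (∑ j ∈ range (n + 1), binomPMF n p j * (1 / (((j : ℝ) + 1) * ((j : ℝ) + 2))))
        + 2 * (1 / (((n : ℝ) + 1) * p * (1 - p))) *
            (∑ j ∈ range (n + 1), binomPMF n p j * (1 / (((n : ℝ) + 1 - (j : ℝ)) * ((n : ℝ) + 2 - (j : ℝ))))) := by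
        simp only [Finset.sum_add_distrib, Finset.sum_sub_distrib, ← Finset.mul_sum]
    _ ≤ (3 * p ^ 3 + 3 * (1 - p) ^ 3 + 2 * p ^ 2 + 2 * (1 - p) ^ 2)
          / (((n : ℝ) + 1) ^ 3 * p ^ 3 * (1 - p) ^ 3) := by
        rw [sum_pmf_one n p, sum_pmf_inv n p hp hp1, sum_pmf_inv_B n p hp hp1]
        have bG1 := sum_pmf_sq_dev n p hp hp1
        have bG2 := sum_pmf_sq_dev_B n p hp hp1
        have bW1 := sum_pmf_invsq n p hp hp1
        have bW2 := sum_pmf_invsq_B n p hp hp1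
        have t1 := mul_le_mul_of_nonneg_left bG1
          (show (0:ℝ) ≤ 2 * (1 / (((n : ℝ) + 1) * p)) ^ 2 by positivity)
        have t2 := mul_le_mul_of_nonneg_left bG2
          (show (0:ℝ) ≤ 2 * (1 / (((n : ℝ) + 1) * (1 - p))) ^ 2 by positivity)
        have t3 := mul_le_mul_of_nonneg_left bW1
          (show (0:ℝ) ≤ 2 * (1 / (((n : ℝ) + 1) * p * (1 - p))) by positivity)
        have t4 := mul_le_mul_of_nonneg_left bW2
          (show (0:ℝ) ≤ 2 * (1 / (((n : ℝ) + 1) * p * (1 - p))) by positivity)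
        have fin := final_scalar n p hp hp1 hq hn0 hNp hF1 hF2
        linarith [t1, t2, t3, t4, fin]
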